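/- For all real numbers X, Y, Z with 0 < X < 1, 0 < Y < 1, 0 < Z < 1, the following hold: (a) 1 - (1/6)*X*Y^3 - (1/6)*X*Y - (2/3)*X > 0; (b) 1 - (1/18)*X*Y^3*Z^6 - (1/9)*X*Y^3 - (1/6)*X*Y - (2/3)*X > 0; (c) 1 + (1/6)*X*Y*(1 - Y^2) - (2/3)*X - (1/3)*Y > 0; (d) 1 + (1/18)*X*Y*(3 - Y^2*Z^6 - 2*Y^2) - (2/3)*X - (1/3)*Y > 0. -/
import Mathlib

theorem stmt5 : ∀ X Y Z : ℝ, 0 < X → X < 1 → 0 < Y → Y < 1 → 0 < Z → Z < 1 →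
    1 - (1/6)*X*Y^3 - (1/6)*X*Y - (2/3)*X > 0 ∧
    1 - (1/18)*X*Y^3*Z^6 - (1/9)*X*Y^3 - (1/6)*X*Y - (2/3)*X > 0 ∧
    1 + (1/6)*X*Y*(1 - Y^2) - (2/3)*X - (1/3)*Y > 0 ∧
    1 + (1/18)*X*Y*(3 - Y^2*Z^6 - 2*Y^2) - (2/3)*X - (1/3)*Y > 0 := by
  intro X Y Z hX hX1 hY hY1 hZ hZ1
  have hY3 : Y^3 < 1 := pow_lt_one₀ hY.le hY1 (by norm_num)
  have hY2 : Y^2 < 1 := pow_lt_one₀ hY.le hY1 (by norm_num)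
  have hZ6 : Z^6 < 1 := pow_lt_one₀ hZ.le hZ1 (by norm_num)
  have hZ6p : 0 < Z^6 := pow_pos hZ 6
  have hY3p : 0 < Y^3 := pow_pos hY 3
  have h1 : X*Y^3 < X := by nlinarith
  have h2 : X*Y < X := by nlinarith
  have h3 : X*Y^3*Z^6 < X := by nlinarith
  refine ⟨by nlinarith, by nlinarith, ?_, ?_⟩
  · nlinarith [mul_pos (mul_pos hX hY) (show (0:ℝ) < 1 - Y^2 by linarith)]
  · nlinarith [mul_pos (mul_pos hX hY) (show (0:ℝ) < 3 - Y^2*Z^6 - 2*Y^2 by nlinarith)]
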